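/- arXiv:2308.14631 — 4 statements merged into one kernel-verified Lean document; each statement's English description precedes it below -/
import Mathlib

section
/- Suppose A₁,…,Aₙ are real 2×2 matrices that commute pairwise and satisfy A₁ᵀA₁ + ⋯ + AₙᵀAₙ = R·I₂ for some R > 0. Then either all Aᵢ are symmetric (Aᵢ = [[aᵢ, bᵢ],[bᵢ, dᵢ]]), or all Aᵢ are of the rotation-scaling form Aᵢ = [[aᵢ, -bᵢ],[bᵢ, aᵢ]]. -/
open Matrix

theorem stmt_2 (n : ℕ) (A : Fin n → Matrix (Fin 2) (Fin 2) ℝ)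
    (hcomm : ∀ i j, A i * A j = A j * A i) (R : ℝ) (hR : 0 < R)
    (hsum : ∑ i, (A i)ᵀ * A i = R • (1 : Matrix (Fin 2) (Fin 2) ℝ)) :
    (∀ i, (A i)ᵀ = A i) ∨ (∀ i, A i 0 0 = A i 1 1 ∧ A i 0 1 = - A i 1 0) := by
  by_cases hsym : ∀ i, A i 0 1 = A i 1 0
  · left
    intro i
    ext r c
    fin_cases r <;> fin_cases c <;> simp only [Matrix.transpose_apply] <;>
      first | rfl | exact hsym i | exact (hsym i).symm
  · right
    push_neg at hsym
    obtain ⟨k, hk⟩ := hsym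
    have hV : A k 0 1 - A k 1 0 ≠ 0 := sub_ne_zero.mpr hk
    -- commutativity entry relations
    have comm00 : ∀ i j, A i 0 0 * A j 0 0 + A i 0 1 * A j 1 0
        = A j 0 0 * A i 0 0 + A j 0 1 * A i 1 0 := by
      intro i j
      have h := congrFun (congrFun (hcomm i j) 0) 0
      simpa [Matrix.mul_apply, Fin.sum_univ_two] using h
    have comm01 : ∀ i j, A i 0 0 * A j 0 1 + A i 0 1 * A j 1 1
        = A j 0 0 * A i 0 1 + A j 0 1 * A i 1 1 := by
      intro i j
      have h := congrFun (congrFun (hcomm i j) 0) 1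
      simpa [Matrix.mul_apply, Fin.sum_univ_two] using h
    have comm10 : ∀ i j, A i 1 0 * A j 0 0 + A i 1 1 * A j 1 0
        = A j 1 0 * A i 0 0 + A j 1 1 * A i 1 0 := by
      intro i j
      have h := congrFun (congrFun (hcomm i j) 1) 0
      simpa [Matrix.mul_apply, Fin.sum_univ_two] using h
    -- sum conditions
    have S00 : ∑ i, (A i 0 0 ^ 2 + A i 1 0 ^ 2) = R := by
      have h := congrFun (congrFun hsum 0) 0
      simpa [Matrix.sum_apply, Matrix.mul_apply, Matrix.transpose_apply,
        Fin.sum_univ_two, Matrix.smul_apply, Matrix.one_apply, sq] using h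
    have S11 : ∑ i, (A i 0 1 ^ 2 + A i 1 1 ^ 2) = R := by
      have h := congrFun (congrFun hsum 1) 1
      simpa [Matrix.sum_apply, Matrix.mul_apply, Matrix.transpose_apply,
        Fin.sum_univ_two, Matrix.smul_apply, Matrix.one_apply, sq] using h
    have S01 : ∑ i, (A i 0 0 * A i 0 1 + A i 1 0 * A i 1 1) = 0 := by
      have h := congrFun (congrFun hsum 0) 1
      simpa [Matrix.sum_apply, Matrix.mul_apply, Matrix.transpose_apply,
        Fin.sum_univ_two, Matrix.smul_apply, Matrix.one_apply] using h
    set U : ℝ := A k 0 0 - A k 1 1 with hUdef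
    set W : ℝ := A k 0 1 + A k 1 0 with hWdef
    -- individual relations
    have hu : ∀ i, (A k 0 1 - A k 1 0) * (A i 0 0 - A i 1 1)
        = (A i 0 1 - A i 1 0) * U := by
      intro i
      linear_combination comm01 i k + comm10 i k
    have hw : ∀ i, (A k 0 1 - A k 1 0) * (A i 0 1 + A i 1 0)
        = (A i 0 1 - A i 1 0) * W := by
      intro i
      linear_combination (-2 : ℝ) * comm00 i k
    set P : ℝ := ∑ i, (A i 0 1 - A i 1 0) * (A i 0 0 + A i 1 1) with hP
    set Q : ℝ := ∑ i, (A i 0 1 - A i 1 0) ^ 2 with hQ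
    have hQpos : 0 < Q := by
      have h1 : (A k 0 1 - A k 1 0) ^ 2 ≤ Q := by
        rw [hQ]
        exact Finset.single_le_sum (f := fun i => (A i 0 1 - A i 1 0) ^ 2)
          (fun i _ => sq_nonneg _) (Finset.mem_univ k)
      have h2 : 0 < (A k 0 1 - A k 1 0) ^ 2 := by positivity
      linarith
    have E1 : U * P - W * Q = 0 := by
      have hterm : ∀ i ∈ Finset.univ, (U * ((A i 0 1 - A i 1 0) * (A i 0 0 + A i 1 1))
            - W * (A i 0 1 - A i 1 0) ^ 2)
          = (A k 0 1 - A k 1 0) *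
            ((A i 0 0 ^ 2 + A i 1 0 ^ 2) - (A i 0 1 ^ 2 + A i 1 1 ^ 2)) := by
        intro i _
        linear_combination (-(A i 0 0 + A i 1 1)) * hu i + (A i 0 1 - A i 1 0) * hw i
      calc U * P - W * Q
          = ∑ i, (U * ((A i 0 1 - A i 1 0) * (A i 0 0 + A i 1 1))
            - W * (A i 0 1 - A i 1 0) ^ 2) := by
            rw [hP, hQ, Finset.sum_sub_distrib, ← Finset.mul_sum, ← Finset.mul_sum]
        _ = ∑ i, (A k 0 1 - A k 1 0) *
            ((A i 0 0 ^ 2 + A i 1 0 ^ 2) - (A i 0 1 ^ 2 + A i 1 1 ^ 2)) :=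
            Finset.sum_congr rfl hterm
        _ = 0 := by
            rw [← Finset.mul_sum, Finset.sum_sub_distrib, S00, S11]
            ring
    have E2 : W * P + U * Q = 0 := by
      have hterm : ∀ i ∈ Finset.univ, (W * ((A i 0 1 - A i 1 0) * (A i 0 0 + A i 1 1))
            + U * (A i 0 1 - A i 1 0) ^ 2)
          = (A k 0 1 - A k 1 0) *
            (2 * (A i 0 0 * A i 0 1 + A i 1 0 * A i 1 1)) := by
        intro i _
        linear_combination (-(A i 0 0 + A i 1 1)) * hw i - (A i 0 1 - A i 1 0) * hu i
      calc W * P + U * Q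
          = ∑ i, (W * ((A i 0 1 - A i 1 0) * (A i 0 0 + A i 1 1))
            + U * (A i 0 1 - A i 1 0) ^ 2) := by
            rw [hP, hQ, Finset.sum_add_distrib, ← Finset.mul_sum, ← Finset.mul_sum]
        _ = ∑ i, (A k 0 1 - A k 1 0) *
            (2 * (A i 0 0 * A i 0 1 + A i 1 0 * A i 1 1)) :=
            Finset.sum_congr rfl hterm
        _ = 0 := by
            rw [← Finset.mul_sum, ← Finset.mul_sum, S01]
            ring
    have hPQ : 0 < P ^ 2 + Q ^ 2 := by nlinarith [sq_nonneg P]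
    have hU0 : U = 0 := by
      have h3 : U * (P ^ 2 + Q ^ 2) = 0 := by linear_combination P * E1 + Q * E2
      rcases mul_eq_zero.mp h3 with h | h
      · exact h
      · linarith
    have hW0 : W = 0 := by
      have h3 : W * (P ^ 2 + Q ^ 2) = 0 := by linear_combination P * E2 - Q * E1
      rcases mul_eq_zero.mp h3 with h | h
      · exact h
      · linarith
    intro i
    constructor
    · have h := hu i
      rw [hU0, mul_zero] at h
      rcases mul_eq_zero.mp h with h' | h'
      · exact absurd h' hV
      · linarith
    · have h := hw i
      rw [hW0, mul_zero] at h
      rcases mul_eq_zero.mp h with h' | h'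
      · exact absurd h' hV
      · linarith
end

section
/- Suppose A₁,…,Aₙ are real 2×2 matrices that commute pairwise and satisfy A₁ᵀA₁ + ⋯ + AₙᵀAₙ = R·I₂ for some R > 0. Then A₁,…,Aₙ are simultaneously unitarily diagonalizable over ℂ: there exists a unitary 2×2 complex matrix P and diagonal complex matrices D₁,…,Dₙ such that Aᵢ = P Dᵢ P* for all i. -/
open Matrix

section Aux

lemma aux_transpose_fin_two {α : Type*} (a b c d : α) : (!![a, b; c, d])ᵀ = !![a, c; b, d] := by
  ext k l; fin_cases k <;> fin_cases l <;> rfl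

lemma aux_isDiag_fin_two {α : Type*} [Zero α] (x y : α) : (!![x, (0:α); 0, y]).IsDiag := by
  intro k l hkl; fin_cases k <;> fin_cases l <;> simp_all

lemma aux_orth_real (b m r : ℝ) (hr : r ≠ 0) (hr2 : r * r = b^2 + m^2) :
    (!![b/r, -(m/r); m/r, b/r])ᵀ * !![b/r, -(m/r); m/r, b/r] = 1 := by
  rw [aux_transpose_fin_two]
  ext k l
  fin_cases k <;> fin_cases l <;>
    · simp [Matrix.mul_apply, Fin.sum_univ_two, Matrix.one_apply]
      first
      | ring1
      | (field_simp
         first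
         | ring1
         | linear_combination hr2
         | linear_combination -hr2
         | linear_combination 2*hr2
         | linear_combination -2*hr2)

lemma aux_key_sym (a b d e f h m r : ℝ) (hb : b ≠ 0) (hr : r ≠ 0)
    (hchar : m^2 + m*(a-d) = b^2) (hr2 : r * r = b^2 + m^2)
    (hrel : a*f + b*h = e*b + f*d) :
    !![e, f; f, h] =
      !![b/r, -(m/r); m/r, b/r] * !![e + f*m/b, 0; 0, h - f*m/b] * (!![b/r, -(m/r); m/r, b/r])ᵀ := by
  rw [aux_transpose_fin_two]
  ext k l
  fin_cases k <;> fin_cases l <;>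
    · simp [Matrix.mul_apply, Fin.sum_univ_two]
      field_simp
      first
      | linear_combination (e*b)*hr2 + (m*f)*hchar - m^2*hrel
      | linear_combination (f*b)*hr2 - (b*f)*hchar + (b*m)*hrel
      | linear_combination (h*b)*hr2 - (m*f)*hchar + m^2*hrel
      | linear_combination (-(e*b))*hr2 - (m*f)*hchar + m^2*hrel
      | linear_combination (-(f*b))*hr2 + (b*f)*hchar - (b*m)*hrel
      | linear_combination (-(h*b))*hr2 + (m*f)*hchar - m^2*hrel
      | linear_combination f*hr2 - f*hchar + m*hrel

lemma aux_sym_build (a b d : ℝ) (hb : b ≠ 0) :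
    ∃ m r : ℝ, r ≠ 0 ∧ r*r = b^2 + m^2 ∧ m^2 + m*(a-d) = b^2 := by
  have hnn : (0:ℝ) ≤ (a-d)^2 + 4*b^2 := by positivity
  have hδ2 : (Real.sqrt ((a-d)^2 + 4*b^2))^2 = (a-d)^2 + 4*b^2 := Real.sq_sqrt hnn
  refine ⟨(d - a + Real.sqrt ((a-d)^2 + 4*b^2))/2, ?_, ?_, ?_, ?_⟩
  · exact Real.sqrt (b^2 + ((d - a + Real.sqrt ((a-d)^2 + 4*b^2))/2)^2)
  · have hb2 : 0 < b^2 := lt_of_le_of_ne (sq_nonneg b) (Ne.symm (pow_ne_zero 2 hb))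
    have hpos : 0 < b^2 + ((d - a + Real.sqrt ((a-d)^2 + 4*b^2))/2)^2 := by
      nlinarith [sq_nonneg ((d - a + Real.sqrt ((a-d)^2 + 4*b^2))/2)]
    exact ne_of_gt (Real.sqrt_pos.mpr hpos)
  · have hb2 : 0 < b^2 := lt_of_le_of_ne (sq_nonneg b) (Ne.symm (pow_ne_zero 2 hb))
    have hpos : 0 ≤ b^2 + ((d - a + Real.sqrt ((a-d)^2 + 4*b^2))/2)^2 := by positivity
    exact Real.mul_self_sqrt hpos
  · linear_combination hδ2/4

lemma aux_dichotomy (n : ℕ) (a b c d : Fin n → ℝ)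
    (h1 : ∀ i j, b i * c j = c i * b j)
    (h2 : ∀ i j, b j * (a i - d i) = b i * (a j - d j))
    (h3 : ∀ i j, c i * (a j - d j) = c j * (a i - d i))
    (hs1 : ∑ i, (a i^2 + c i^2) = ∑ i, (b i^2 + d i^2))
    (hs2 : ∑ i, (a i * b i + c i * d i) = 0) :
    (∀ i, b i = c i) ∨ (∀ i, c i = -b i ∧ a i = d i) := by
  by_cases hbc : ∀ i, b i = c i
  · exact Or.inl hbc
  push_neg at hbc
  obtain ⟨i₀, hi₀⟩ := hbc
  set u : Fin n → ℝ := fun i => b i - c i with hu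
  set v : Fin n → ℝ := fun i => b i + c i with hv
  set w : Fin n → ℝ := fun i => a i - d i with hw
  set s : Fin n → ℝ := fun i => a i + d i with hs
  have hU : u i₀ ≠ 0 := sub_ne_zero.mpr hi₀
  have p1 : ∀ i, u i₀ * v i = u i * v i₀ := by
    intro i; simp only [hu, hv]; nlinarith [h1 i i₀, h1 i₀ i]
  have p2 : ∀ i, u i₀ * w i = u i * w i₀ := by
    intro i; simp only [hu, hw]; linarith [h2 i₀ i, h3 i₀ i]
  have S1 : ∑ i, (u i * v i) = ∑ i, (w i * s i) := by
    have e1 : ∀ i ∈ Finset.univ, u i * v i - w i * s i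
        = (b i^2 + d i^2) - (a i^2 + c i^2) := by
      intro i _; simp only [hu, hv, hw, hs]; ring
    have h := Finset.sum_congr rfl e1
    rw [Finset.sum_sub_distrib, Finset.sum_sub_distrib] at h
    linarith [h, hs1]
  have S2 : ∑ i, (s i * v i + w i * u i) = 0 := by
    have e1 : ∀ i ∈ Finset.univ, s i * v i + w i * u i
        = 2 * (a i * b i + c i * d i) := by
      intro i _; simp only [hu, hv, hw, hs]; ring
    rw [Finset.sum_congr rfl e1, ← Finset.mul_sum, hs2, mul_zero]
  set U := u i₀ with hUdef
  set V := v i₀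
  set W := w i₀
  have key1 : U * V * (∑ i, (u i)^2) = U * W * (∑ i, (u i * s i)) := by
    have l1 : ∑ i, U^2*(u i * v i) = ∑ i, U*V*((u i)^2) := by
      refine Finset.sum_congr rfl fun i _ => ?_
      linear_combination (U * u i) * p1 i
    have l2 : ∑ i, U^2*(w i * s i) = ∑ i, U*W*(u i * s i) := by
      refine Finset.sum_congr rfl fun i _ => ?_
      linear_combination (U * s i) * p2 i
    rw [← Finset.mul_sum, ← Finset.mul_sum] at l1 l2
    rw [← l1, ← l2, S1]
  have key2 : V * (∑ i, (u i * s i)) + W * (∑ i, (u i)^2) = 0 := by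
    have l3 : ∑ i, U*(s i * v i + w i * u i) = ∑ i, (V*(u i * s i) + W*((u i)^2)) := by
      refine Finset.sum_congr rfl fun i _ => ?_
      linear_combination (s i) * p1 i + (u i) * p2 i
    rw [← Finset.mul_sum, S2, mul_zero] at l3
    rw [Finset.sum_add_distrib, ← Finset.mul_sum, ← Finset.mul_sum] at l3
    linarith [l3]
  set E := ∑ i, (u i)^2 with hE
  set σ := ∑ i, (u i * s i) with hσ
  have hEpos : 0 < E := by
    have h1' : U^2 ≤ E := by
      rw [hE, hUdef]
      exact Finset.single_le_sum (f := fun i => (u i)^2) (fun i _ => sq_nonneg _) (Finset.mem_univ i₀)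
    have h2' : 0 < U^2 := lt_of_le_of_ne (sq_nonneg U) (Ne.symm (pow_ne_zero 2 hU))
    linarith
  have hVE : V * E = W * σ := by
    apply mul_left_cancel₀ hU; linear_combination key1
  have hzero : E * (V^2 + W^2) = 0 := by linear_combination V * hVE + W * key2
  have hvw : V^2 + W^2 = 0 := by
    rcases mul_eq_zero.mp hzero with h | h
    · exact absurd h (ne_of_gt hEpos)
    · exact h
  have hV : V = 0 := by nlinarith [sq_nonneg V, sq_nonneg W]
  have hW : W = 0 := by nlinarith [sq_nonneg V, sq_nonneg W]
  right
  intro i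
  have hv0 : v i = 0 := by
    have h := p1 i; rw [hV, mul_zero] at h
    exact (mul_eq_zero.mp h).resolve_left hU
  have hw0 : w i = 0 := by
    have h := p2 i; rw [hW, mul_zero] at h
    exact (mul_eq_zero.mp h).resolve_left hU
  have hv0' : b i + c i = 0 := hv0
  have hw0' : a i - d i = 0 := hw0
  exact ⟨by linarith, by linarith⟩

lemma aux_sym_case (n : ℕ) (A : Fin n → Matrix (Fin 2) (Fin 2) ℝ)
    (hsymm : ∀ i, A i 1 0 = A i 0 1)
    (hcomm : ∀ i j, A i * A j = A j * A i) :
    ∃ P : Matrix (Fin 2) (Fin 2) ℝ, Pᵀ * P = 1 ∧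
      ∀ i, ∃ D : Matrix (Fin 2) (Fin 2) ℝ, D.IsDiag ∧ A i = P * D * Pᵀ := by
  by_cases hball : ∀ i, A i 0 1 = 0
  · refine ⟨1, by simp, fun i => ⟨A i, ?_, by simp⟩⟩
    intro k l hkl
    fin_cases k <;> fin_cases l
    · exact absurd rfl hkl
    · exact hball i
    · show A i 1 0 = 0
      rw [hsymm i]; exact hball i
    · exact absurd rfl hkl
  push_neg at hball
  obtain ⟨i₀, hb0⟩ := hball
  obtain ⟨m, r, hrne, hr2, hchar⟩ :=
    aux_sym_build (A i₀ 0 0) (A i₀ 0 1) (A i₀ 1 1) hb0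
  refine ⟨!![A i₀ 0 1/r, -(m/r); m/r, A i₀ 0 1/r], aux_orth_real _ m r hrne hr2, fun j => ?_⟩
  have h01 : (A i₀ * A j) 0 1 = (A j * A i₀) 0 1 := by rw [hcomm i₀ j]
  simp only [Matrix.mul_apply, Fin.sum_univ_two] at h01
  have hrel : A i₀ 0 0 * A j 0 1 + A i₀ 0 1 * A j 1 1
      = A j 0 0 * A i₀ 0 1 + A j 0 1 * A i₀ 1 1 := by linear_combination h01
  refine ⟨!![A j 0 0 + A j 0 1 * m / A i₀ 0 1, 0; 0, A j 1 1 - A j 0 1 * m / A i₀ 0 1],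
    aux_isDiag_fin_two _ _, ?_⟩
  have hkey := aux_key_sym (A i₀ 0 0) (A i₀ 0 1) (A i₀ 1 1) (A j 0 0) (A j 0 1) (A j 1 1)
    m r hb0 hrne hchar hr2 hrel
  rw [Matrix.eta_fin_two (A j), hsymm j]
  exact hkey

lemma aux_conjTranspose_fin_two (a b c d : ℂ) :
    (!![a, b; c, d])ᴴ = !![starRingEnd ℂ a, starRingEnd ℂ c; starRingEnd ℂ b, starRingEnd ℂ d] := by
  ext k l; fin_cases k <;> fin_cases l <;> rfl

lemma aux_rot_orth (s : ℂ) (hs : s * s = 1/2) (hcs : starRingEnd ℂ s = s) :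
    (!![s, s; -s*Complex.I, s*Complex.I])ᴴ * !![s, s; -s*Complex.I, s*Complex.I] = 1 := by
  have hI : Complex.I * Complex.I = -1 := Complex.I_mul_I
  rw [aux_conjTranspose_fin_two]
  ext k l
  fin_cases k <;> fin_cases l <;>
    · simp [Matrix.mul_apply, Fin.sum_univ_two, Matrix.one_apply, _root_.map_mul, hcs,
        Complex.conj_I]
      first
      | linear_combination 2*hs - s*s*hI
      | linear_combination s*s*hI

lemma aux_rot_diag (s : ℂ) (x y : ℝ) (hs : s * s = 1/2) (hcs : starRingEnd ℂ s = s) :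
    !![s, s; -s*Complex.I, s*Complex.I] * !![(x:ℂ) - y*Complex.I, 0; 0, (x:ℂ) + y*Complex.I] *
      (!![s, s; -s*Complex.I, s*Complex.I])ᴴ = !![(x:ℂ), (y:ℂ); -(y:ℂ), (x:ℂ)] := by
  have hI : Complex.I * Complex.I = -1 := Complex.I_mul_I
  rw [aux_conjTranspose_fin_two]
  ext k l
  fin_cases k <;> fin_cases l <;>
    · simp [Matrix.mul_apply, Fin.sum_univ_two, _root_.map_mul, hcs, Complex.conj_I]
      first
      | linear_combination (2*(x:ℂ))*hs
      | linear_combination (-2*(y:ℂ)*Complex.I^2)*hs - (y:ℂ)*hI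
      | linear_combination (2*(y:ℂ)*Complex.I^2)*hs + (y:ℂ)*hI
      | linear_combination (-2*(x:ℂ)*Complex.I^2)*hs - (x:ℂ)*hI

lemma aux_lift (n : ℕ) (A : Fin n → Matrix (Fin 2) (Fin 2) ℝ)
    (P : Matrix (Fin 2) (Fin 2) ℝ) (hP : Pᵀ * P = 1)
    (hA : ∀ i, ∃ D : Matrix (Fin 2) (Fin 2) ℝ, D.IsDiag ∧ A i = P * D * Pᵀ) :
    ∃ P' : Matrix (Fin 2) (Fin 2) ℂ, P'ᴴ * P' = 1 ∧
      ∀ i, ∃ D : Matrix (Fin 2) (Fin 2) ℂ, D.IsDiag ∧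
        (A i).map Complex.ofReal = P' * D * P'ᴴ := by
  have hmap : ∀ M N : Matrix (Fin 2) (Fin 2) ℝ,
      (M * N).map Complex.ofReal = M.map Complex.ofReal * N.map Complex.ofReal :=
    fun M N => Matrix.map_mul (f := Complex.ofRealHom)
  have hct : (P.map Complex.ofReal)ᴴ = Pᵀ.map Complex.ofReal := by
    ext k l; simp [Matrix.conjTranspose_apply, Complex.conj_ofReal]
  refine ⟨P.map Complex.ofReal, ?_, ?_⟩
  · rw [hct, ← hmap, hP]
    simp
  · intro i
    obtain ⟨D, hD, hAD⟩ := hA i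
    refine ⟨D.map Complex.ofReal, ?_, ?_⟩
    · intro k l hkl
      simp [Matrix.map_apply, hD hkl]
    · rw [hAD, hmap, hmap, hct]

end Aux

theorem stmt_3 (n : ℕ) (A : Fin n → Matrix (Fin 2) (Fin 2) ℝ)
    (hcomm : ∀ i j, A i * A j = A j * A i) (R : ℝ) (hR : 0 < R)
    (hsum : ∑ i, (A i)ᵀ * A i = R • (1 : Matrix (Fin 2) (Fin 2) ℝ)) :
    ∃ P : Matrix (Fin 2) (Fin 2) ℂ, Pᴴ * P = 1 ∧
      ∀ i, ∃ D : Matrix (Fin 2) (Fin 2) ℂ, D.IsDiag ∧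
        (A i).map Complex.ofReal = P * D * Pᴴ := by
  classical
  -- entrywise consequences of hsum
  have h00 : ∑ i, (A i 0 0 * A i 0 0 + A i 1 0 * A i 1 0) = R := by
    have h := congrArg (fun M : Matrix (Fin 2) (Fin 2) ℝ => M 0 0) hsum
    simpa [Matrix.sum_apply, Matrix.mul_apply, Fin.sum_univ_two, Matrix.one_apply] using h
  have h11 : ∑ i, (A i 0 1 * A i 0 1 + A i 1 1 * A i 1 1) = R := by
    have h := congrArg (fun M : Matrix (Fin 2) (Fin 2) ℝ => M 1 1) hsum
    simpa [Matrix.sum_apply, Matrix.mul_apply, Fin.sum_univ_two, Matrix.one_apply] using h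
  have h01 : ∑ i, (A i 0 0 * A i 0 1 + A i 1 0 * A i 1 1) = 0 := by
    have h := congrArg (fun M : Matrix (Fin 2) (Fin 2) ℝ => M 0 1) hsum
    simpa [Matrix.sum_apply, Matrix.mul_apply, Fin.sum_univ_two, Matrix.one_apply] using h
  have hs1 : ∑ i, ((A i 0 0)^2 + (A i 1 0)^2) = ∑ i, ((A i 0 1)^2 + (A i 1 1)^2) := by
    have c1 : ∑ i, ((A i 0 0)^2 + (A i 1 0)^2) = ∑ i, (A i 0 0 * A i 0 0 + A i 1 0 * A i 1 0) :=
      Finset.sum_congr rfl (fun i _ => by ring)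
    have c2 : ∑ i, ((A i 0 1)^2 + (A i 1 1)^2) = ∑ i, (A i 0 1 * A i 0 1 + A i 1 1 * A i 1 1) :=
      Finset.sum_congr rfl (fun i _ => by ring)
    rw [c1, c2, h00, h11]
  -- entrywise consequences of commutation
  have hc1 : ∀ i j, A i 0 1 * A j 1 0 = A i 1 0 * A j 0 1 := by
    intro i j
    have h := congrArg (fun M : Matrix (Fin 2) (Fin 2) ℝ => M 0 0) (hcomm i j)
    simp only [Matrix.mul_apply, Fin.sum_univ_two] at h
    linear_combination h
  have hc2 : ∀ i j, A j 0 1 * (A i 0 0 - A i 1 1) = A i 0 1 * (A j 0 0 - A j 1 1) := by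
    intro i j
    have h := congrArg (fun M : Matrix (Fin 2) (Fin 2) ℝ => M 0 1) (hcomm i j)
    simp only [Matrix.mul_apply, Fin.sum_univ_two] at h
    linear_combination h
  have hc3 : ∀ i j, A i 1 0 * (A j 0 0 - A j 1 1) = A j 1 0 * (A i 0 0 - A i 1 1) := by
    intro i j
    have h := congrArg (fun M : Matrix (Fin 2) (Fin 2) ℝ => M 1 0) (hcomm i j)
    simp only [Matrix.mul_apply, Fin.sum_univ_two] at h
    linear_combination h
  rcases aux_dichotomy n (fun i => A i 0 0) (fun i => A i 0 1) (fun i => A i 1 0)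
      (fun i => A i 1 1) hc1 hc2 hc3 hs1 h01 with hsymm | hrot
  · -- symmetric case
    obtain ⟨P, hP, hdiag⟩ := aux_sym_case n A (fun i => (hsymm i).symm) hcomm
    exact aux_lift n A P hP hdiag
  · -- rotation case
    set s : ℂ := ((Real.sqrt 2 : ℝ) : ℂ)⁻¹ with hsdef
    have h2 : ((Real.sqrt 2 : ℝ) : ℂ) * ((Real.sqrt 2 : ℝ) : ℂ) = 2 := by
      rw [← Complex.ofReal_mul, Real.mul_self_sqrt (by norm_num)]
      norm_num
    have hs : s * s = 1/2 := by
      rw [hsdef, ← mul_inv, h2]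
      norm_num
    have hcs : starRingEnd ℂ s = s := by
      rw [hsdef, map_inv₀, Complex.conj_ofReal]
    refine ⟨!![s, s; -s*Complex.I, s*Complex.I], aux_rot_orth s hs hcs, fun i => ?_⟩
    refine ⟨!![(A i 0 0 : ℂ) - (A i 0 1 : ℂ)*Complex.I, 0;
               0, (A i 0 0 : ℂ) + (A i 0 1 : ℂ)*Complex.I], aux_isDiag_fin_two _ _, ?_⟩
    have hmapA : (A i).map Complex.ofReal
        = !![(A i 0 0 : ℂ), (A i 0 1 : ℂ); -(A i 0 1 : ℂ), (A i 0 0 : ℂ)] := by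
      rw [Matrix.eta_fin_two ((A i).map Complex.ofReal)]
      have e1 : A i 1 0 = -(A i 0 1) := (hrot i).1
      have e2 : A i 1 1 = A i 0 0 := ((hrot i).2).symm
      simp [Matrix.map_apply, e1, e2]
    rw [hmapA]
    exact (aux_rot_diag s (A i 0 0) (A i 0 1) hs hcs).symm
end

section
/- Let a₁,…,aₙ, b₁,…,bₙ, c₁,…,cₙ, d₁,…,dₙ be real numbers with not all cᵢ zero. Suppose bᵢ = t cᵢ and aᵢ = s cᵢ + dᵢ for all i (for some reals s, t), and suppose Σ(aᵢ² + bᵢ²) = Σ(cᵢ² + dᵢ²) = R and Σ(aᵢcᵢ + bᵢdᵢ) = 0. Then (1 - t)·(s·Σcᵢdᵢ − (1+t)·Σcᵢ²) = 0. -/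
theorem stmt_11 (n : ℕ) (a b c d : Fin n → ℝ) (s t R : ℝ) (hR : 0 < R)
    (hc : ∃ i, c i ≠ 0)
    (hb : ∀ i, b i = t * c i) (ha : ∀ i, a i = s * c i + d i)
    (h1 : ∑ i, (a i ^ 2 + b i ^ 2) = R)
    (h2 : ∑ i, (c i ^ 2 + d i ^ 2) = R)
    (h3 : ∑ i, (a i * c i + b i * d i) = 0) :
    (1 - t) * (s * ∑ i, c i * d i - (1 + t) * ∑ i, c i ^ 2) = 0 := by
  set C := ∑ i, c i ^ 2 with hCdef
  set E := ∑ i, c i * d i with hEdef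
  set D := ∑ i, d i ^ 2 with hDdef
  obtain ⟨j, hj⟩ := hc
  have hC : 0 < C := by
    apply Finset.sum_pos' (fun i _ => sq_nonneg _)
    exact ⟨j, Finset.mem_univ j, by positivity⟩
  have h2' : C + D = R := by
    rw [hCdef, hDdef, ← Finset.sum_add_distrib]; exact h2
  have e1 : ∑ i, (a i ^ 2 + b i ^ 2)
      = (s ^ 2 + t ^ 2) * C + 2 * s * E + D := by
    rw [hCdef, hEdef, hDdef, Finset.mul_sum, Finset.mul_sum,
      ← Finset.sum_add_distrib, ← Finset.sum_add_distrib]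
    exact Finset.sum_congr rfl fun i _ => by rw [ha i, hb i]; ring
  have e3 : ∑ i, (a i * c i + b i * d i) = s * C + (1 + t) * E := by
    rw [hCdef, hEdef, Finset.mul_sum, Finset.mul_sum, ← Finset.sum_add_distrib]
    exact Finset.sum_congr rfl fun i _ => by rw [ha i, hb i]; ring
  have eq1 : (s ^ 2 + t ^ 2 - 1) * C + 2 * s * E = 0 := by
    rw [e1] at h1; linarith
  have eq2 : s * C + (1 + t) * E = 0 := by rw [e3] at h3; exact h3
  have keyC : C * ((t - 1) * (s ^ 2 + (1 + t) ^ 2)) = 0 := by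
    linear_combination (1 + t) * eq1 - 2 * s * eq2
  have key : (t - 1) * (s ^ 2 + (1 + t) ^ 2) = 0 :=
    (mul_eq_zero.mp keyC).resolve_left (ne_of_gt hC)
  rcases eq_or_ne (1 + t) 0 with h1t | h1t
  · have ht : t = -1 := by linarith
    have hs : s = 0 := by
      have := key
      rw [ht] at this
      nlinarith [sq_nonneg s]
    rw [ht, hs]; ring
  · have h4 : (1 + t) * ((1 - t) * (s * E - (1 + t) * C)) = 0 := by
      linear_combination C * key + (1 - t) * s * eq2
    exact (mul_eq_zero.mp h4).resolve_left h1t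
end

section
/- Let (a_α)_{|α| ≤ r} be vectors in ℝ² indexed by multi-indices α ∈ ℕⁿ with |α| ≤ r, and define y_{β,γ} = a_βᵀ a_γ. Suppose the sphere relation Σ_{i=1}^n y_{β+eᵢ, γ+eᵢ} = R·y_{β,γ} holds for all |β|,|γ| ≤ r−1, with R > 0. Then for any real coefficients (w_α)_{|α| ≤ r−1}: Σ_{i=1}^n ‖Σ_α w_α a_{α+eᵢ}‖² = R·‖Σ_α w_α a_α‖². In particular, if Σ_α w_α a_α = 0 then Σ_α w_α a_{α+eᵢ} = 0 for every i. -/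
theorem stmt_16 (n r : ℕ) (a : (Fin n → ℕ) → EuclideanSpace ℝ (Fin 2)) (R : ℝ) (hR : 0 < R)
    (hsphere : ∀ β γ : Fin n → ℕ, (∑ i, β i) ≤ r - 1 → (∑ i, γ i) ≤ r - 1 →
      ∑ i : Fin n,
          (inner ℝ (a (Function.update β i (β i + 1))) (a (Function.update γ i (γ i + 1))) : ℝ)
        = R * inner ℝ (a β) (a γ))
    (S : Finset (Fin n → ℕ)) (hS : ∀ α ∈ S, (∑ i, α i) ≤ r - 1)
    (w : (Fin n → ℕ) → ℝ) :
    (∑ i : Fin n, ‖∑ α ∈ S, w α • a (Function.update α i (α i + 1))‖ ^ 2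
        = R * ‖∑ α ∈ S, w α • a α‖ ^ 2)
    ∧ ((∑ α ∈ S, w α • a α) = 0 →
        ∀ i, (∑ α ∈ S, w α • a (Function.update α i (α i + 1))) = 0) := by
  have main : ∑ i : Fin n, ‖∑ α ∈ S, w α • a (Function.update α i (α i + 1))‖ ^ 2
      = R * ‖∑ α ∈ S, w α • a α‖ ^ 2 := by
    have h1 : ∀ i : Fin n, ‖∑ α ∈ S, w α • a (Function.update α i (α i + 1))‖ ^ 2
        = ∑ β ∈ S, ∑ γ ∈ S, w β * (w γ *
            (inner ℝ (a (Function.update β i (β i + 1))) (a (Function.update γ i (γ i + 1))) : ℝ)) := by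
      intro i
      rw [← real_inner_self_eq_norm_sq]
      simp only [sum_inner, inner_sum, real_inner_smul_left, real_inner_smul_right]
      exact Finset.sum_congr rfl fun β _ => Finset.sum_congr rfl fun γ _ => by
        rw [real_inner_comm]
    simp_rw [h1]
    rw [Finset.sum_comm]
    rw [← real_inner_self_eq_norm_sq]
    simp only [sum_inner, inner_sum, real_inner_smul_left, real_inner_smul_right]
    rw [Finset.mul_sum]
    refine Finset.sum_congr rfl fun β hβ => ?_
    rw [Finset.sum_comm, Finset.mul_sum]
    refine Finset.sum_congr rfl fun γ hγ => ?_
    rw [← Finset.mul_sum, ← Finset.mul_sum, hsphere β γ (hS β hβ) (hS γ hγ), real_inner_comm]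
    ring
  refine ⟨main, fun h0 i => ?_⟩
  have hz : ∑ i : Fin n, ‖∑ α ∈ S, w α • a (Function.update α i (α i + 1))‖ ^ 2 = 0 := by
    rw [main, h0, norm_zero]; ring
  have := (Finset.sum_eq_zero_iff_of_nonneg (fun j _ => by positivity)).mp hz i (Finset.mem_univ i)
  have hn : ‖∑ α ∈ S, w α • a (Function.update α i (α i + 1))‖ = 0 := by
    nlinarith [norm_nonneg (∑ α ∈ S, w α • a (Function.update α i (α i + 1)))]
  exact norm_eq_zero.mp hn
end
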